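/- arXiv:hep-th/0003239 — 2 statements merged into one kernel-verified Lean document; each statement's English description precedes it below -/
import Mathlib

section
/- Let n be an integer. Define g_n(Θ,φ) := exp((nφ/2)·k)·exp(−(Θ/2)·j)·exp(−(nφ/2)·k) and Ã_Θ(φ) := (1/2)(sin(nφ)·i − cos(nφ)·j). Then for all real Θ, φ: g_n(Θ,φ) · Ã_Θ(φ) · g_n(Θ,φ)⁻¹ + g_n(Θ,φ) · ∂_Θ( g_n(Θ,φ)⁻¹ ) = 0. (The dΘ-component of the Charap–Duff connection is gauged away by g_n.) -/
open scoped Quaternion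

/-- The imaginary unit `i` of the real quaternions. -/
def qi : ℍ[ℝ] := ⟨0, 1, 0, 0⟩

/-- The imaginary unit `j` of the real quaternions. -/
def qj : ℍ[ℝ] := ⟨0, 0, 1, 0⟩

/-- The imaginary unit `k` of the real quaternions. -/
def qk : ℍ[ℝ] := ⟨0, 0, 0, 1⟩

/-- The gauge transformation `g_n(Θ,φ) = exp((nφ/2)k)·exp(−(Θ/2)j)·exp(−(nφ/2)k)`. -/
noncomputable def gaugeG (n : ℤ) (Θ φ : ℝ) : ℍ[ℝ] :=
  NormedSpace.exp ((n * φ / 2 : ℝ) • qk) * NormedSpace.exp ((-(Θ / 2) : ℝ) • qj) *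
    NormedSpace.exp ((-(n * φ / 2) : ℝ) • qk)

/-- The `dΘ`-component `Ã_Θ(φ) = (1/2)(sin(nφ)·i − cos(nφ)·j)` of the Charap–Duff
connection. -/
noncomputable def Atheta (n : ℤ) (φ : ℝ) : ℍ[ℝ] :=
  (2⁻¹ * Real.sin (n * φ)) • qi - (2⁻¹ * Real.cos (n * φ)) • qj

@[simp] lemma qi_re : qi.re = 0 := rfl
@[simp] lemma qi_imI : qi.imI = 1 := rfl
@[simp] lemma qi_imJ : qi.imJ = 0 := rfl
@[simp] lemma qi_imK : qi.imK = 0 := rfl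
@[simp] lemma qj_re : qj.re = 0 := rfl
@[simp] lemma qj_imI : qj.imI = 0 := rfl
@[simp] lemma qj_imJ : qj.imJ = 1 := rfl
@[simp] lemma qj_imK : qj.imK = 0 := rfl
@[simp] lemma qk_re : qk.re = 0 := rfl
@[simp] lemma qk_imI : qk.imI = 0 := rfl
@[simp] lemma qk_imJ : qk.imJ = 0 := rfl
@[simp] lemma qk_imK : qk.imK = 1 := rfl

lemma norm_of_normSq_one (q : ℍ[ℝ]) (h : Quaternion.normSq q = 1) : ‖q‖ = 1 := by
  have h2 := Quaternion.normSq_eq_norm_mul_self q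
  nlinarith [norm_nonneg q]

lemma exp_pure_smul (t : ℝ) (q : ℍ[ℝ]) (hre : q.re = 0) (hu : ‖q‖ = 1) :
    NormedSpace.exp (t • q) = Real.cos t • (1 : ℍ[ℝ]) + Real.sin t • q := by
  have hre' : (t • q).re = 0 := by simp [hre]
  have hn : ‖t • q‖ = |t| := by
    rw [norm_smul, hu, Real.norm_eq_abs, mul_one]
  have hsin : Real.sin |t| / |t| * t = Real.sin t := by
    rcases eq_or_ne t 0 with rfl | ht
    · simp
    · rcases abs_cases t with ⟨h1, _⟩ | ⟨h1, _⟩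
      · rw [h1, div_mul_cancel₀ _ ht]
      · rw [h1, Real.sin_neg, neg_div_neg_eq, div_mul_cancel₀ _ ht]
  rw [Quaternion.exp_of_re_eq_zero _ hre', hn, Real.cos_abs, smul_smul, hsin]
  congr 1
  ext <;> simp

lemma normSq_pure (x y z : ℝ) :
    Quaternion.normSq ((x • qi + y • qj + z • qk : ℍ[ℝ])) = x ^ 2 + y ^ 2 + z ^ 2 := by
  rw [Quaternion.normSq_def']
  simp

lemma exp_combo (t x y z : ℝ) (h : x ^ 2 + y ^ 2 + z ^ 2 = 1) :
    NormedSpace.exp (t • (x • qi + y • qj + z • qk : ℍ[ℝ]))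
      = Real.cos t • (1 : ℍ[ℝ]) + Real.sin t • (x • qi + y • qj + z • qk) := by
  refine exp_pure_smul t _ (by simp) (norm_of_normSq_one _ ?_)
  rw [normSq_pure, h]

lemma expj (t : ℝ) :
    NormedSpace.exp (t • qj) = Real.cos t • (1 : ℍ[ℝ]) + Real.sin t • qj := by
  have := exp_combo t 0 1 0 (by norm_num)
  simpa using this

lemma expk (t : ℝ) :
    NormedSpace.exp (t • qk) = Real.cos t • (1 : ℍ[ℝ]) + Real.sin t • qk := by
  have := exp_combo t 0 0 1 (by norm_num)
  simpa using this

lemma gaugeG_explicit (n : ℤ) (Θ φ : ℝ) :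
    gaugeG n Θ φ = Real.cos (Θ / 2) • (1 : ℍ[ℝ])
      + (Real.sin (n * φ) * Real.sin (Θ / 2)) • qi
      - (Real.cos (n * φ) * Real.sin (Θ / 2)) • qj := by
  rw [gaugeG, expk, expj, expk]
  have h1 : Real.sin (n * φ) = 2 * Real.sin (n * φ / 2) * Real.cos (n * φ / 2) := by
    rw [← Real.sin_two_mul]; ring_nf
  have h3 := Real.sin_sq_add_cos_sq (n * φ / 2)
  have h2 : Real.cos (n * φ) = Real.cos (n * φ / 2) ^ 2 - Real.sin (n * φ / 2) ^ 2 := by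
    have hc := Real.cos_two_mul (n * φ / 2)
    rw [show 2 * ((n : ℝ) * φ / 2) = n * φ by ring] at hc
    linarith
  ext <;>
    simp [Real.cos_neg, Real.sin_neg, h1, h2] <;>
    linarith [h3, (by linear_combination Real.cos (Θ / 2) * h3 :
      Real.sin (n * φ / 2) ^ 2 * Real.cos (Θ / 2)
        + Real.cos (n * φ / 2) ^ 2 * Real.cos (Θ / 2) = Real.cos (Θ / 2))]

lemma gaugeG_inv (n : ℤ) (Θ φ : ℝ) :
    (gaugeG n Θ φ)⁻¹ = NormedSpace.exp (Θ • (-Atheta n φ)) := by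
  symm
  apply eq_inv_of_mul_eq_one_left
  have hpy := Real.sin_sq_add_cos_sq (n * φ)
  have hsm : Θ • (-Atheta n φ)
      = (Θ / 2) • ((-Real.sin (n * φ)) • qi + Real.cos (n * φ) • qj + (0 : ℝ) • qk) := by
    ext <;> simp [Atheta] <;> ring
  rw [hsm, exp_combo _ _ _ _ (by nlinarith), gaugeG_explicit]
  have h3 := Real.sin_sq_add_cos_sq (Θ / 2)
  ext <;> simp <;>
    linarith [h3, (by linear_combination Real.sin (Θ / 2) ^ 2 * hpy :
      Real.sin (n * φ) ^ 2 * Real.sin (Θ / 2) ^ 2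
        + Real.cos (n * φ) ^ 2 * Real.sin (Θ / 2) ^ 2 = Real.sin (Θ / 2) ^ 2)]

/-- The `dΘ`-component of the Charap–Duff connection is gauged away by `g_n`:
`g_n·Ã_Θ·g_n⁻¹ + g_n·∂_Θ(g_n⁻¹) = 0`. -/
theorem gauge_transforms_theta_component_to_zero (n : ℤ) (Θ φ : ℝ) :
    gaugeG n Θ φ * Atheta n φ * (gaugeG n Θ φ)⁻¹
      + gaugeG n Θ φ * deriv (fun t : ℝ => (gaugeG n t φ)⁻¹) Θ = 0 := by
  have heq : (fun t : ℝ => (gaugeG n t φ)⁻¹)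
      = fun t : ℝ => NormedSpace.exp (t • (-Atheta n φ)) :=
    funext fun t => gaugeG_inv n t φ
  have hd : deriv (fun t : ℝ => (gaugeG n t φ)⁻¹) Θ
      = -Atheta n φ * NormedSpace.exp (Θ • (-Atheta n φ)) := by
    rw [heq]
    exact (hasDerivAt_exp_smul_const' (𝕂 := ℝ) (-Atheta n φ) Θ).deriv
  rw [hd, ← gaugeG_inv]
  noncomm_ring
end

section
/- Let n be an integer, c a real constant, and r ≠ 0 a real number. With g_n(Θ,φ) := exp((nφ/2)·k)·exp(−(Θ/2)·j)·exp(−(nφ/2)·k) and q_n(Θ,φ) := sin Θ cos(nφ)·i + sin Θ sin(nφ)·j + cos Θ·k, the dτ-component Ã_τ := (n/2)(c − 1/r)·q_n(Θ,φ) of the Charap–Duff connection transforms as: g_n(Θ,φ) · Ã_τ · g_n(Θ,φ)⁻¹ = (n/2)(c − 1/r)·k, for all real Θ, φ. -/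
open scoped Quaternion

lemma norm_qj : ‖qj‖ = 1 := by
  have h : Quaternion.normSq qj = 1 := by simp [Quaternion.normSq_def']
  have := Quaternion.normSq_eq_norm_mul_self qj
  nlinarith [norm_nonneg qj]

lemma norm_qk : ‖qk‖ = 1 := by
  have h : Quaternion.normSq qk = 1 := by simp [Quaternion.normSq_def']
  have := Quaternion.normSq_eq_norm_mul_self qk
  nlinarith [norm_nonneg qk]

lemma exp_smul_qj (t : ℝ) : NormedSpace.exp (t • qj) = (Real.cos t : ℍ[ℝ]) + Real.sin t • qj := by
  have hre : (t • qj).re = 0 := by simp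
  rw [Quaternion.exp_of_re_eq_zero _ hre, norm_smul, norm_qj]
  rcases lt_trichotomy t 0 with ht | ht | ht
  · rw [Real.norm_eq_abs, abs_of_neg ht, mul_one, Real.cos_neg, Real.sin_neg]
    ext <;> simp <;> field_simp [ht.ne]
  · subst ht; ext <;> simp
  · rw [Real.norm_eq_abs, abs_of_pos ht, mul_one]
    ext <;> simp <;> field_simp [ht.ne']

lemma exp_smul_qk (t : ℝ) : NormedSpace.exp (t • qk) = (Real.cos t : ℍ[ℝ]) + Real.sin t • qk := by
  have hre : (t • qk).re = 0 := by simp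
  rw [Quaternion.exp_of_re_eq_zero _ hre, norm_smul, norm_qk]
  rcases lt_trichotomy t 0 with ht | ht | ht
  · rw [Real.norm_eq_abs, abs_of_neg ht, mul_one, Real.cos_neg, Real.sin_neg]
    ext <;> simp <;> field_simp [ht.ne]
  · subst ht; ext <;> simp
  · rw [Real.norm_eq_abs, abs_of_pos ht, mul_one]
    ext <;> simp <;> field_simp [ht.ne']


/-- The Charap–Duff field `q_n(Θ,φ) = sin Θ cos(nφ)·i + sin Θ sin(nφ)·j + cos Θ·k`. -/
noncomputable def charapDuffQ (n : ℤ) (Θ φ : ℝ) : ℍ[ℝ] :=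
  (Real.sin Θ * Real.cos (n * φ)) • qi + (Real.sin Θ * Real.sin (n * φ)) • qj
    + Real.cos Θ • qk

lemma gaugeG_ne_zero (n : ℤ) (Θ φ : ℝ) : gaugeG n Θ φ ≠ 0 := by
  have h : ∀ q : ℍ[ℝ], NormedSpace.exp q ≠ 0 := by
    intro q hq
    have h1 := Quaternion.norm_exp q
    rw [hq, norm_zero, ← Real.exp_eq_exp_ℝ, Real.norm_eq_abs, abs_of_pos (Real.exp_pos q.re)] at h1
    exact (Real.exp_pos q.re).ne h1
  exact mul_ne_zero (mul_ne_zero (h _) (h _)) (h _)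

lemma key (n : ℤ) (Θ φ : ℝ) :
    gaugeG n Θ φ * charapDuffQ n Θ φ = qk * gaugeG n Θ φ := by
  have h5 : Real.sin (Θ/2)^2 + Real.cos (Θ/2)^2 = 1 := Real.sin_sq_add_cos_sq _
  have h6 : Real.sin ((n:ℝ)*φ/2)^2 + Real.cos ((n:ℝ)*φ/2)^2 = 1 := Real.sin_sq_add_cos_sq _
  have h1 : Real.sin Θ = 2 * Real.sin (Θ/2) * Real.cos (Θ/2) := by
    rw [← Real.sin_two_mul]; ring_nf
  have h2 : Real.cos Θ = 2 * Real.cos (Θ/2)^2 - 1 := by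
    rw [← Real.cos_two_mul]; ring_nf
  have h3 : Real.sin ((n:ℝ)*φ) = 2 * Real.sin ((n:ℝ)*φ/2) * Real.cos ((n:ℝ)*φ/2) := by
    rw [← Real.sin_two_mul]; ring_nf
  have h4 : Real.cos ((n:ℝ)*φ) = 2 * Real.cos ((n:ℝ)*φ/2)^2 - 1 := by
    rw [← Real.cos_two_mul]; ring_nf
  unfold gaugeG charapDuffQ
  rw [exp_smul_qk, exp_smul_qj, exp_smul_qk]
  rw [show ((n:ℤ):ℝ) * φ / 2 = (n:ℝ)*φ/2 from rfl]
  rw [h1, h2, h3, h4]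
  ext
  · simp [Quaternion.re_mul, Quaternion.imI_mul, Quaternion.imJ_mul, Quaternion.imK_mul]
    linear_combination (-4*Real.sin (Θ/2)^2*Real.cos (Θ/2)*Real.sin ((n:ℝ)*φ/2)*Real.cos ((n:ℝ)*φ/2)) * h6
  · simp [Quaternion.re_mul, Quaternion.imI_mul, Quaternion.imJ_mul, Quaternion.imK_mul]
    linear_combination (-4*Real.sin (Θ/2)*Real.cos ((n:ℝ)*φ/2)^2 + 4*Real.sin (Θ/2)*Real.cos ((n:ℝ)*φ/2)^4 + 4*Real.sin (Θ/2)*Real.sin ((n:ℝ)*φ/2)^2*Real.cos ((n:ℝ)*φ/2)^2)*h5 + (4*Real.sin (Θ/2)*Real.cos ((n:ℝ)*φ/2)^2 - 4*Real.sin (Θ/2)^3*Real.cos ((n:ℝ)*φ/2)^2)*h6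
  · simp [Quaternion.re_mul, Quaternion.imI_mul, Quaternion.imJ_mul, Quaternion.imK_mul]
    linear_combination (-4*Real.sin (Θ/2)*Real.sin ((n:ℝ)*φ/2)*Real.cos ((n:ℝ)*φ/2) + 4*Real.sin (Θ/2)*Real.sin ((n:ℝ)*φ/2)*Real.cos ((n:ℝ)*φ/2)^3 + 4*Real.sin (Θ/2)*Real.sin ((n:ℝ)*φ/2)^3*Real.cos ((n:ℝ)*φ/2))*h5 + (4*Real.sin (Θ/2)*Real.sin ((n:ℝ)*φ/2)*Real.cos ((n:ℝ)*φ/2) - 4*Real.sin (Θ/2)^3*Real.sin ((n:ℝ)*φ/2)*Real.cos ((n:ℝ)*φ/2))*h6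
  · simp [Quaternion.re_mul, Quaternion.imI_mul, Quaternion.imJ_mul, Quaternion.imK_mul]
    linear_combination (2*Real.cos (Θ/2)*Real.cos ((n:ℝ)*φ/2)^2 + 2*Real.cos (Θ/2)*Real.sin ((n:ℝ)*φ/2)^2)*h5 + (4*Real.sin (Θ/2)^2*Real.cos (Θ/2)*Real.cos ((n:ℝ)*φ/2)^2)*h6

/-- The `dτ`-component `Ã_τ = (n/2)(c − 1/r)·q_n` of the Charap–Duff connection is
transformed by pure conjugation with `g_n` into the Abelian potential
`(n/2)(c − 1/r)·k`. -/
theorem gauge_transforms_tau_component (n : ℤ) (c : ℝ) (r : ℝ) (hr : r ≠ 0) (Θ φ : ℝ) :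
    gaugeG n Θ φ * (((n : ℝ) / 2 * (c - 1 / r)) • charapDuffQ n Θ φ) * (gaugeG n Θ φ)⁻¹
      = ((n : ℝ) / 2 * (c - 1 / r)) • qk := by
  rw [mul_inv_eq_iff_eq_mul₀ (gaugeG_ne_zero n Θ φ), mul_smul_comm, smul_mul_assoc, key]
end
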